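/- For an integer k ≥ 2, a graph G has a spanning subgraph each of whose components is a star K_{1,j} with 1 ≤ j ≤ k if and only if iso(G−S) ≤ k|S| for all S ⊆ V(G). (Amahashi–Kano theorem.) -/

import Mathlib

open SimpleGraph

/-- The number of isolated vertices of `G - S` (vertices outside `S` all of whose
neighbors in `G` lie in `S`). -/
noncomputable def isoNum {V : Type*} (G : SimpleGraph V) (S : Set V) : ℕ :=
  {v : V | v ∉ S ∧ ∀ w : V, G.Adj v w → w ∈ S}.ncard

/-- The connected component of `v` in `F`, viewed as a graph on its vertex set:
the graph induced by `F` on the component containing `v`. -/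
def compAt {V : Type*} (F : SimpleGraph V) (v : V) :
    SimpleGraph (F.connectedComponentMk v).supp :=
  F.induce (F.connectedComponentMk v).supp

/-- A graph in which every vertex has degree between `1` and `k` and every edge has an
endpoint of degree `1`; such graphs are exactly disjoint unions of stars `K_{1,j}`,
`1 ≤ j ≤ k`. -/
def AKGood {V : Type*} (k : ℕ) (F : SimpleGraph V) : Prop :=
  (∀ v, 1 ≤ (F.neighborSet v).ncard ∧ (F.neighborSet v).ncard ≤ k) ∧
  ∀ x y, F.Adj x y → (F.neighborSet x).ncard = 1 ∨ (F.neighborSet y).ncard = 1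

section Aux

open Finset

lemma ak_forward {V : Type*} [Fintype V] {G F : SimpleGraph V} {k : ℕ} (hFG : F ≤ G)
    (hdeg : ∀ v, 1 ≤ (F.neighborSet v).ncard ∧ (F.neighborSet v).ncard ≤ k) :
    ∀ S : Set V, isoNum G S ≤ k * S.ncard := by
  classical
  intro S
  have hpick : ∀ v : V, ∃ w, F.Adj v w := by
    intro v
    have h1 := (hdeg v).1
    have : (F.neighborSet v).Nonempty := by
      rw [Set.nonempty_iff_ne_empty]
      intro h
      rw [h] at h1; simp at h1
    exact this
  choose f hf using hpick
  set I : Set V := {v : V | v ∉ S ∧ ∀ w : V, G.Adj v w → w ∈ S} with hI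
  have hIfin : I.Finite := Set.toFinite _
  have hSfin : S.Finite := Set.toFinite _
  have hmaps : ∀ a ∈ hIfin.toFinset, f a ∈ hSfin.toFinset := by
    intro a ha
    rw [Set.Finite.mem_toFinset] at ha ⊢
    exact ha.2 (f a) (hFG (hf a))
  have hfib : ∀ b ∈ hSfin.toFinset,
      (hIfin.toFinset.filter fun a => f a = b).card ≤ k := by
    intro b _
    have hsub : ↑(hIfin.toFinset.filter fun a => f a = b) ⊆ F.neighborSet b := by
      intro a ha
      simp only [Finset.coe_filter, Set.mem_setOf_eq] at ha
      have := hf a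
      rw [ha.2] at this
      exact this.symm
    calc (hIfin.toFinset.filter fun a => f a = b).card
        = (↑(hIfin.toFinset.filter fun a => f a = b) : Set V).ncard := by
          rw [Set.ncard_coe_finset]
      _ ≤ (F.neighborSet b).ncard := Set.ncard_le_ncard hsub (Set.toFinite _)
      _ ≤ k := (hdeg b).2
  have := Finset.card_le_mul_card_image_of_maps_to hmaps k hfib
  calc isoNum G S = hIfin.toFinset.card := by rw [isoNum, ← hI, Set.ncard_eq_toFinset_card]
    _ ≤ k * hSfin.toFinset.card := this
    _ = k * S.ncard := by rw [Set.ncard_eq_toFinset_card]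

lemma ak_mem_supp_self {V : Type*} (F : SimpleGraph V) (v : V) :
    v ∈ (F.connectedComponentMk v).supp := by
  rw [ConnectedComponent.mem_supp_iff]

lemma ak_adj_mem_supp {V : Type*} {F : SimpleGraph V} {v w : V} (h : F.Adj v w) :
    w ∈ (F.connectedComponentMk v).supp := by
  rw [ConnectedComponent.mem_supp_iff]
  exact ConnectedComponent.sound h.symm.reachable

/-- Neighbor set of `v` inside its own component graph is equivalent to the neighbor set
in `F`. -/
noncomputable def ak_nbrEquiv {V : Type*} (F : SimpleGraph V) (v : V) :
    ((compAt F v).neighborSet ⟨v, ak_mem_supp_self F v⟩) ≃ (F.neighborSet v) where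
  toFun w := ⟨(w : (F.connectedComponentMk v).supp), w.2⟩
  invFun w := ⟨⟨(w : V), ak_adj_mem_supp w.2⟩, w.2⟩
  left_inv w := by ext; rfl
  right_inv w := by ext; rfl

lemma ak_cbg_nbr_card {j : ℕ} (hj : 1 ≤ j) (x : (Fin 1) ⊕ (Fin j)) :
    Nat.card ((completeBipartiteGraph (Fin 1) (Fin j)).neighborSet x) = 1 ∨
    Nat.card ((completeBipartiteGraph (Fin 1) (Fin j)).neighborSet x) = j := by
  cases x with
  | inl a =>
    right
    have : (completeBipartiteGraph (Fin 1) (Fin j)).neighborSet (Sum.inl a)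
        = Set.range (Sum.inr : Fin j → Fin 1 ⊕ Fin j) := by
      ext y; cases y <;> simp [completeBipartiteGraph]
    rw [this, Nat.card_range_of_injective Sum.inr_injective]
    simp
  | inr b =>
    left
    have : (completeBipartiteGraph (Fin 1) (Fin j)).neighborSet (Sum.inr b)
        = Set.range (Sum.inl : Fin 1 → Fin 1 ⊕ Fin j) := by
      ext y; cases y <;> simp [completeBipartiteGraph]
    rw [this, Nat.card_range_of_injective Sum.inl_injective]
    simp

lemma ak_deg_of_iso {V : Type*} [Fintype V] {F : SimpleGraph V} {k j : ℕ} {v : V}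
    (hj1 : 1 ≤ j) (hjk : j ≤ k)
    (φ : compAt F v ≃g completeBipartiteGraph (Fin 1) (Fin j)) :
    1 ≤ (F.neighborSet v).ncard ∧ (F.neighborSet v).ncard ≤ k := by
  have hcard : (F.neighborSet v).ncard
      = Nat.card ((completeBipartiteGraph (Fin 1) (Fin j)).neighborSet
          (φ ⟨v, ak_mem_supp_self F v⟩)) := by
    rw [← Nat.card_coe_set_eq]
    exact Nat.card_congr ((ak_nbrEquiv F v).symm.trans (φ.mapNeighborSet _))
  rcases ak_cbg_nbr_card hj1 (φ ⟨v, ak_mem_supp_self F v⟩) with h | h <;> rw [hcard, h] <;>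
    omega

lemma ak_star_iso {V : Type*} [Fintype V] {F : SimpleGraph V} {k : ℕ}
    (hG : AKGood k F) (v : V) :
    ∃ j : ℕ, 1 ≤ j ∧ j ≤ k ∧
      Nonempty (compAt F v ≃g completeBipartiteGraph (Fin 1) (Fin j)) := by
  classical
  obtain ⟨hd1, hd2⟩ := hG
  have hnonempty : ∀ u : V, (F.neighborSet u).Nonempty := by
    intro u
    rw [Set.nonempty_iff_ne_empty]
    intro h
    have := (hd1 u).1
    rw [h] at this; simp at this
  have hsingle : ∀ u : V, (F.neighborSet u).ncard = 1 → ∀ x ∈ F.neighborSet u,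
      F.neighborSet u = {x} := by
    intro u hu x hx
    obtain ⟨a, ha⟩ := Set.ncard_eq_one.mp hu
    rw [ha] at hx ⊢
    rw [Set.mem_singleton_iff] at hx
    rw [hx]
  obtain ⟨w, hw⟩ := hnonempty v
  obtain ⟨c, hcv, hleaf⟩ :
      ∃ c : V, (c = v ∨ F.Adj c v) ∧ (∀ u, F.Adj c u → F.neighborSet u = {c}) := by
    by_cases h1 : (F.neighborSet v).ncard = 1
    · refine ⟨w, Or.inr hw.symm, ?_⟩
      intro u hu
      by_cases h2 : (F.neighborSet w).ncard = 1
      · have hNw : F.neighborSet w = {v} := hsingle w h2 v hw.symm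
        have : u = v := by
          have : u ∈ F.neighborSet w := hu
          rw [hNw] at this; exact this
        rw [this]
        exact hsingle v h1 w hw
      · have := (hd2 w u hu).resolve_left h2
        exact hsingle u this w ((F.adj_comm w u).mp hu)
    · refine ⟨v, Or.inl rfl, ?_⟩
      intro u hu
      have := (hd2 v u hu).resolve_left h1
      exact hsingle u this v ((F.adj_comm v u).mp hu)
  have hcomp_cv : F.connectedComponentMk c = F.connectedComponentMk v := by
    rcases hcv with h | h
    · rw [h]
    · exact ConnectedComponent.sound h.reachable
  have hmem : ∀ x : V, x ∈ (F.connectedComponentMk v).supp ↔ (x = c ∨ F.Adj c x) := by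
    intro x
    constructor
    · intro hx
      rw [ConnectedComponent.mem_supp_iff] at hx
      have hr : F.Reachable c x := ConnectedComponent.exact (hcomp_cv.trans hx.symm)
      obtain ⟨p⟩ := hr
      have key : ∀ (a b : V) (_ : F.Walk a b), (a = c ∨ F.Adj c a) → (b = c ∨ F.Adj c b) := by
        intro a b p
        induction p with
        | nil => exact id
        | @cons u x' w' h p ih =>
          intro ha
          apply ih
          rcases ha with rfl | ha
          · exact Or.inr h
          · have := hleaf u ha
            have hx'c : x' ∈ F.neighborSet u := h
            rw [this] at hx'c
            exact Or.inl hx'c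
      exact key c x p (Or.inl rfl)
    · intro hx
      rw [ConnectedComponent.mem_supp_iff]
      rcases hx with rfl | hx
      · exact hcomp_cv
      · exact (ConnectedComponent.sound hx.symm.reachable).trans hcomp_cv
  set j := (F.neighborSet c).ncard with hj
  refine ⟨j, (hd1 c).1, (hd1 c).2, ?_⟩
  have hcardwrap : Fintype.card (F.neighborSet c) = j := by
    rw [← Nat.card_eq_fintype_card, Nat.card_coe_set_eq]
  let eq1 : (F.neighborSet c) ≃ Fin j := Fintype.equivFinOfCardEq hcardwrap
  have hcsupp : c ∈ (F.connectedComponentMk v).supp := (hmem c).2 (Or.inl rfl)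
  let toF : ((F.connectedComponentMk v).supp : Set V) → Fin 1 ⊕ Fin j := fun x =>
    if h : (x : V) = c then Sum.inl 0
    else Sum.inr (eq1 ⟨x, ((hmem x).1 x.2).resolve_left h⟩)
  let invF : Fin 1 ⊕ Fin j → ((F.connectedComponentMk v).supp : Set V) := fun s =>
    match s with
    | Sum.inl _ => ⟨c, hcsupp⟩
    | Sum.inr i => ⟨(eq1.symm i : V), (hmem _).2 (Or.inr (eq1.symm i).2)⟩
  have hlinv : Function.LeftInverse invF toF := by
    intro x
    by_cases h : (x : V) = c
    · simp only [toF, dif_pos h, invF]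
      exact Subtype.ext h.symm
    · simp only [toF, dif_neg h, invF]
      apply Subtype.ext
      show ((eq1.symm (eq1 ⟨x, _⟩) : F.neighborSet c) : V) = (x : V)
      rw [Equiv.symm_apply_apply]
  have hrinv : Function.RightInverse invF toF := by
    intro s
    match s with
    | Sum.inl i =>
      simp only [invF, toF, dif_pos rfl]
      congr 1
      exact Subsingleton.elim _ _
    | Sum.inr i =>
      have hne : ((eq1.symm i : F.neighborSet c) : V) ≠ c := by
        intro h
        have := (eq1.symm i).2
        rw [h] at this
        exact F.irrefl this
      simp only [invF, toF, dif_neg hne]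
      congr 1
      have : (⟨((eq1.symm i : F.neighborSet c) : V), _⟩ : F.neighborSet c) = eq1.symm i :=
        Subtype.ext rfl
      rw [this, Equiv.apply_symm_apply]
  refine ⟨⟨⟨toF, invF, hlinv, hrinv⟩, ?_⟩⟩
  intro a b
  show (completeBipartiteGraph (Fin 1) (Fin j)).Adj (toF a) (toF b) ↔ (compAt F v).Adj a b
  have hrhs : (compAt F v).Adj a b ↔ F.Adj (a : V) (b : V) := Iff.rfl
  rw [hrhs]
  by_cases ha : (a : V) = c <;> by_cases hb : (b : V) = c
  · simp only [toF, dif_pos ha, dif_pos hb, completeBipartiteGraph_adj]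
    simp [ha, hb]
  · simp only [toF, dif_pos ha, dif_neg hb, completeBipartiteGraph_adj]
    simp only [Sum.isLeft_inl, Sum.isRight_inr, Sum.isRight_inl, Sum.isLeft_inr]
    simp only [true_and, and_true, or_false]
    constructor
    · intro _
      rw [ha]
      exact ((hmem b).1 b.2).resolve_left hb
    · intro _; trivial
  · simp only [toF, dif_neg ha, dif_pos hb, completeBipartiteGraph_adj]
    simp only [Sum.isLeft_inl, Sum.isRight_inr, Sum.isRight_inl, Sum.isLeft_inr]
    simp only [true_and, and_true, false_or, and_false, false_and]
    constructor
    · intro _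
      rw [hb]
      exact (((hmem a).1 a.2).resolve_left ha).symm
    · intro _; trivial
  · simp only [toF, dif_neg ha, dif_neg hb, completeBipartiteGraph_adj,
      Sum.isLeft_inr, Sum.isRight_inr, Sum.isLeft_inl, Sum.isRight_inl]
    constructor
    · rintro (⟨h, -⟩ | ⟨-, h⟩) <;> simp at h
    intro hadj
    exfalso
    have hbmem : (b : V) ∈ F.neighborSet (a : V) := hadj
    have haadj : F.Adj c (a : V) := ((hmem a).1 a.2).resolve_left ha
    rw [hleaf _ haadj] at hbmem
    exact hb hbmem

end Aux

section Aux2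
open Finset

lemma ak_edge_induce {V : Type*} [Fintype V] (G : SimpleGraph V) (A : Set V) :
    ((G.induce A).edgeSet).ncard ≤ G.edgeSet.ncard := by
  apply Set.ncard_le_ncard_of_injOn (Sym2.map Subtype.val)
  · intro e he
    induction e using Sym2.ind with
    | _ a b =>
      rw [SimpleGraph.mem_edgeSet] at he
      rw [Sym2.map_pair_eq, SimpleGraph.mem_edgeSet]
      exact he
  · exact (Sym2.map.injective Subtype.val_injective).injOn

lemma ak_hall {V : Type*} [Fintype V] [DecidableEq V] (G : SimpleGraph V) (k : ℕ) (hk : 2 ≤ k)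
    (hcond : ∀ S' : Set V, isoNum G S' ≤ k * S'.ncard)
    (S₀ I : Finset V)
    (hns : ∀ i ∈ I, ∀ w, G.Adj i w → w ∈ S₀) (hdisj : ∀ i ∈ I, i ∉ S₀) :
    ∃ f : V → V, (∀ i ∈ I, G.Adj i (f i) ∧ f i ∈ S₀) ∧
      ∀ s : V, (I.filter (fun i => f i = s)).card ≤ k := by
  classical
  set t : ↥I → Finset (V × Fin k) := fun i => (G.neighborFinset ↑i) ×ˢ Finset.univ with ht
  have hall : ∀ s : Finset ↥I, s.card ≤ (s.biUnion t).card := by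
    intro s
    have hB : s.biUnion t = (s.biUnion fun i => G.neighborFinset ↑i) ×ˢ Finset.univ := by
      ext ⟨a, b⟩
      simp [ht]
    rw [hB, Finset.card_product]
    set B := s.biUnion fun i => G.neighborFinset ↑i with hBdef
    have hsub : (Subtype.val '' (↑s : Set ↥I)) ⊆
        {v : V | v ∉ (↑B : Set V) ∧ ∀ w : V, G.Adj v w → w ∈ (↑B : Set V)} := by
      rintro x ⟨i, hi, rfl⟩
      constructor
      · intro hxB
        rw [Finset.mem_coe, hBdef, Finset.mem_biUnion] at hxB
        obtain ⟨j, _, hj⟩ := hxB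
        rw [SimpleGraph.mem_neighborFinset] at hj
        exact hdisj _ i.2 (hns _ j.2 _ hj)
      · intro w hw
        rw [Finset.mem_coe, hBdef, Finset.mem_biUnion]
        exact ⟨i, hi, (SimpleGraph.mem_neighborFinset _ _ _).mpr hw⟩
    have h1 : s.card ≤ isoNum G ↑B := by
      have := Set.ncard_le_ncard hsub (Set.toFinite _)
      rw [Set.ncard_image_of_injective _ Subtype.val_injective, Set.ncard_coe_finset] at this
      exact this
    have h2 := hcond (↑B : Set V)
    rw [Set.ncard_coe_finset] at h2
    have := h1.trans h2
    simpa [Fintype.card_fin, Nat.mul_comm] using this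
  obtain ⟨Ff, hFinj, hFmem⟩ :=
    (Finset.all_card_le_biUnion_card_iff_exists_injective t).mp hall
  have hFmem' : ∀ i : ↥I, (Ff i).1 ∈ G.neighborFinset (i : V) := by
    intro i
    have := hFmem i
    rw [ht, Finset.mem_product] at this
    exact this.1
  refine ⟨fun v => if h : v ∈ I then (Ff ⟨v, h⟩).1 else v, ?_, ?_⟩
  · intro i hi
    have h1 := hFmem' ⟨i, hi⟩
    rw [SimpleGraph.mem_neighborFinset] at h1
    simp only [dif_pos hi]
    exact ⟨h1, hns i hi _ h1⟩
  · intro s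
    have hmapsuniv : ∀ a ∈ I.filter (fun i => (if h : i ∈ I then (Ff ⟨i, h⟩).1 else i) = s),
        (fun v : V => if h : v ∈ I then ((Ff ⟨v, h⟩).2 : Fin k) else ⟨0, by omega⟩) a
          ∈ (Finset.univ : Finset (Fin k)) := fun _ _ => Finset.mem_univ _
    have hinj : Set.InjOn
        (fun v : V => if h : v ∈ I then ((Ff ⟨v, h⟩).2 : Fin k) else ⟨0, by omega⟩)
        ↑(I.filter (fun i => (if h : i ∈ I then (Ff ⟨i, h⟩).1 else i) = s)) := by
      intro a ha b hb hab
      rw [Finset.coe_filter, Set.mem_setOf_eq] at ha hb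
      obtain ⟨haI, has⟩ := ha
      obtain ⟨hbI, hbs⟩ := hb
      simp only [dif_pos haI, dif_pos hbI] at has hab hbs
      have : Ff ⟨a, haI⟩ = Ff ⟨b, hbI⟩ := Prod.ext (has.trans hbs.symm) hab
      have := hFinj this
      exact congrArg Subtype.val this
    calc (I.filter (fun i => (if h : i ∈ I then (Ff ⟨i, h⟩).1 else i) = s)).card
        ≤ (Finset.univ : Finset (Fin k)).card :=
          Finset.card_le_card_of_injOn _ hmapsuniv hinj
      _ = k := by simp

universe u

lemma ak_core (k : ℕ) (hk : 2 ≤ k) :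
    ∀ (n : ℕ) (V : Type u) [Fintype V] (G : SimpleGraph V),
      Fintype.card V + G.edgeSet.ncard = n →
      (∀ S : Set V, isoNum G S ≤ k * S.ncard) →
      ∃ F : SimpleGraph V, F ≤ G ∧ AKGood k F := by
  intro n
  induction n using Nat.strong_induction_on with
  | _ n ih =>
  intro V _ G hn hcond
  classical
  by_cases hV : IsEmpty V
  · exact ⟨⊥, bot_le, fun v => isEmptyElim v, fun x y h => isEmptyElim x⟩
  rw [not_isEmpty_iff] at hV
  by_cases hA : ∃ S : Finset V, S.Nonempty ∧ k * S.card < isoNum G ↑S + k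
  -- ==================== CASE A ====================
  · obtain ⟨SA, hSAne, hSAlb⟩ := hA
    set d : Finset V → ℤ := fun S => (isoNum G ↑S : ℤ) - k * S.card with hd
    have hfilne : ((Finset.univ : Finset (Finset V)).filter (fun S : Finset V => S.Nonempty)).Nonempty :=
      ⟨SA, by simp [hSAne]⟩
    obtain ⟨S₀, hS₀mem, hS₀max⟩ := Finset.exists_max_image _ d hfilne
    rw [Finset.mem_filter] at hS₀mem
    have hS₀ne : S₀.Nonempty := hS₀mem.2
    have hmax : ∀ T : Finset V, T.Nonempty → d T ≤ d S₀ := fun T hT =>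
      hS₀max T (by simp [hT])
    have hS₀lb : (k : ℤ) * S₀.card < (isoNum G ↑S₀ : ℤ) + k := by
      have h1 := hmax SA hSAne
      have h2 : (k : ℤ) * SA.card < (isoNum G ↑SA : ℤ) + k := by exact_mod_cast hSAlb
      simp only [hd] at h1
      linarith
    set Iset : Set V := {x : V | x ∉ (↑S₀ : Set V) ∧ ∀ z, G.Adj x z → z ∈ (↑S₀ : Set V)}
      with hIset
    have hIsofin : Iset.Finite := Set.toFinite _
    set Ifin := hIsofin.toFinset with hIfindef
    have hIcard : isoNum G ↑S₀ = Ifin.card := by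
      rw [hIfindef, ← Set.ncard_eq_toFinset_card]
      rfl
    have hmemIfin : ∀ x : V, x ∈ Ifin ↔ x ∈ Iset := fun x => Set.Finite.mem_toFinset _
    have hIS₀ : ∀ i ∈ Ifin, i ∉ S₀ := by
      intro i hi
      rw [hmemIfin] at hi
      exact fun h => hi.1 (by exact_mod_cast h)
    have hIns : ∀ i ∈ Ifin, ∀ w, G.Adj i w → w ∈ S₀ := by
      intro i hi w hw
      rw [hmemIfin] at hi
      exact_mod_cast hi.2 w hw
    obtain ⟨f, hf1, hf2⟩ := ak_hall G k hk hcond S₀ Ifin hIns hIS₀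
    -- nonempty fibers
    have hfib : ∀ s ∈ S₀, ∃ i ∈ Ifin, f i = s := by
      intro s hs
      by_contra hno
      push_neg at hno
      have hmapsto : ∀ a ∈ Ifin, f a ∈ S₀.erase s := fun a ha =>
        Finset.mem_erase.mpr ⟨hno a ha, (hf1 a ha).2⟩
      have hcount := Finset.card_le_mul_card_image_of_maps_to hmapsto k (fun b _ => hf2 b)
      rw [Finset.card_erase_of_mem hs] at hcount
      have hc3 : 1 ≤ S₀.card := Finset.card_pos.mpr hS₀ne
      obtain ⟨c', hc'⟩ : ∃ c', S₀.card = c' + 1 := ⟨S₀.card - 1, by omega⟩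
      rw [hc'] at hcount
      simp only [Nat.add_sub_cancel] at hcount
      have hcountz : (Ifin.card : ℤ) ≤ (k : ℤ) * c' := by exact_mod_cast hcount
      rw [hIcard, hc'] at hS₀lb
      push_cast at hS₀lb
      linarith
    -- the remaining vertex set
    set Aset : Set V := ((↑S₀ : Set V) ∪ Iset)ᶜ with hAsetdef
    have hAmem : ∀ x : V, x ∈ Aset ↔ (x ∉ S₀ ∧ x ∉ Ifin) := by
      intro x
      rw [hAsetdef, Set.mem_compl_iff, Set.mem_union, hmemIfin]
      push_neg
      constructor
      · rintro ⟨h1, h2⟩; exact ⟨by exact_mod_cast h1, h2⟩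
      · rintro ⟨h1, h2⟩; exact ⟨by exact_mod_cast h1, h2⟩
    have hAnotI : ∀ x : V, x ∈ Aset → x ∉ Iset := fun x hx hxI =>
      ((hAmem x).1 hx).2 ((hmemIfin x).mpr hxI)
    have hAnotS : ∀ x : V, x ∈ Aset → x ∉ (↑S₀ : Set V) := fun x hx h =>
      ((hAmem x).1 hx).1 (by exact_mod_cast h)
    set G' : SimpleGraph ↥Aset := G.induce Aset with hG'
    have hG'adj : ∀ (a b : ↥Aset), G'.Adj a b ↔ G.Adj ↑a ↑b := by
      intro a b; rw [hG']; simp [comap_adj]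
    have hcond' : ∀ T : Set ↥Aset, isoNum G' T ≤ k * T.ncard := by
      intro T
      set Th : Set V := Subtype.val '' T with hTh
      have hThA : Th ⊆ Aset := by rintro x ⟨tx, htx, rfl⟩; exact tx.2
      set J' : Set ↥Aset := {x : ↥Aset | x ∉ T ∧ ∀ z, G'.Adj x z → z ∈ T} with hJ'
      have hWsub : (Subtype.val '' J') ∪ Iset ⊆
          {x : V | x ∉ ((↑S₀ : Set V) ∪ Th) ∧ ∀ z, G.Adj x z → z ∈ ((↑S₀ : Set V) ∪ Th)} := by
        rintro x (⟨x', hx', rfl⟩ | hxI)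
        · constructor
          · rintro (hx | hx)
            · exact ((hAmem _).1 x'.2).1 (by exact_mod_cast hx)
            · obtain ⟨tx, htx, hteq⟩ := hx
              rw [Subtype.ext hteq] at htx
              exact hx'.1 htx
          · intro z hz
            by_cases hzA : z ∈ Aset
            · have hadj : G'.Adj x' ⟨z, hzA⟩ := (hG'adj _ _).mpr hz
              right
              exact ⟨⟨z, hzA⟩, hx'.2 _ hadj, rfl⟩
            · rw [hAsetdef, Set.mem_compl_iff, not_not, Set.mem_union] at hzA
              rcases hzA with hz1 | hz2
              · left; exact hz1
              · exfalso
                exact ((hAmem _).1 x'.2).1 (by exact_mod_cast hz2.2 _ hz.symm)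
        · constructor
          · rintro (hx | hx)
            · exact hxI.1 hx
            · exact hAnotI _ (hThA hx) hxI
          · intro z hz
            left
            exact hxI.2 z hz
      have hdisjW : Disjoint (Subtype.val '' J') Iset := by
        rw [Set.disjoint_left]
        rintro x ⟨x', hx', rfl⟩ hxI
        exact hAnotI _ x'.2 hxI
      have hcount1 : isoNum G' T + Ifin.card ≤ isoNum G ((↑S₀ : Set V) ∪ Th) := by
        have h1 := Set.ncard_le_ncard hWsub (Set.toFinite _)
        rw [Set.ncard_union_eq hdisjW (Set.toFinite _) (Set.toFinite _),
          Set.ncard_image_of_injective _ Subtype.val_injective] at h1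
        have hIeq : Iset.ncard = Ifin.card := by
          rw [hIfindef, ← Set.ncard_eq_toFinset_card]
        rw [hIeq] at h1
        exact h1
      set Tfin := (Set.toFinite Th).toFinset with hTfindef
      have hcoe : (↑(S₀ ∪ Tfin) : Set V) = (↑S₀ : Set V) ∪ Th := by
        rw [Finset.coe_union, hTfindef, Set.Finite.coe_toFinset]
      have hdisjST : Disjoint S₀ Tfin := by
        rw [Finset.disjoint_left]
        intro x hx hxT
        rw [hTfindef, Set.Finite.mem_toFinset] at hxT
        exact hAnotS _ (hThA hxT) (by exact_mod_cast hx) 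
      have hmaxT := hmax (S₀ ∪ Tfin) (hS₀ne.mono Finset.subset_union_left)
      simp only [hd] at hmaxT
      rw [Finset.card_union_of_disjoint hdisjST, hcoe] at hmaxT
      have hTcard : Tfin.card = T.ncard := by
        rw [hTfindef, ← Set.ncard_eq_toFinset_card, hTh,
          Set.ncard_image_of_injective _ Subtype.val_injective]
      rw [hTcard, hIcard] at hmaxT
      have hc1z : (isoNum G' T : ℤ) + Ifin.card ≤ (isoNum G ((↑S₀ : Set V) ∪ Th) : ℤ) := by
        exact_mod_cast hcount1
      have : (isoNum G' T : ℤ) ≤ (k : ℤ) * T.ncard := by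
        rw [hIcard] at *
        push_cast at hmaxT ⊢
        linarith
      exact_mod_cast this
    -- induction
    have hcardlt : Fintype.card ↥Aset < Fintype.card V := by
      obtain ⟨s0, hs0⟩ := hS₀ne
      exact Fintype.card_subtype_lt (fun hs : s0 ∈ Aset => hAnotS s0 hs (by exact_mod_cast hs0))
    have hmeas : Fintype.card ↥Aset + G'.edgeSet.ncard < n := by
      have h1 := ak_edge_induce G Aset
      rw [← hG'] at h1
      omega
    obtain ⟨F', hF'le, hF'good⟩ := ih _ hmeas ↥Aset G' rfl hcond'
    -- build the factor
    let FAdj : V → V → Prop := fun a b =>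
      (∃ (ha : a ∈ Aset) (hb : b ∈ Aset), F'.Adj ⟨a, ha⟩ ⟨b, hb⟩) ∨
      (a ∈ Ifin ∧ f a = b) ∨ (b ∈ Ifin ∧ f b = a)
    have hFsymm : Symmetric FAdj := by
      intro a b h
      rcases h with ⟨ha, hb, h⟩ | h | h
      · exact Or.inl ⟨hb, ha, h.symm⟩
      · exact Or.inr (Or.inr h)
      · exact Or.inr (Or.inl h)
    have hFirr : ∀ a, ¬ FAdj a a := by
      intro a h
      rcases h with ⟨ha, hb, h⟩ | ⟨ha, hfa⟩ | ⟨ha, hfa⟩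
      · have : (⟨a, ha⟩ : ↥Aset) = ⟨a, hb⟩ := Subtype.ext rfl
        rw [this] at h
        exact F'.irrefl h
      · have := (hf1 a ha).2
        rw [hfa] at this
        exact hIS₀ a ha this
      · have := (hf1 a ha).2
        rw [hfa] at this
        exact hIS₀ a ha this
    set F : SimpleGraph V := ⟨FAdj, ⟨by intro a b h; exact hFsymm h⟩, ⟨hFirr⟩⟩ with hFdef
    have hFadj : ∀ a b, F.Adj a b ↔ FAdj a b := fun a b => Iff.rfl
    have hFle : F ≤ G := by
      intro a b h
      rcases h with ⟨ha, hb, h⟩ | ⟨ha, h⟩ | ⟨hb, h⟩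
      · exact (hG'adj _ _).mp (hF'le h)
      · rw [← h]; exact (hf1 a ha).1
      · rw [← h]; exact ((hf1 b hb).1).symm
    have hNI : ∀ a, a ∈ Ifin → F.neighborSet a = {f a} := by
      intro a ha
      ext b
      simp only [SimpleGraph.mem_neighborSet, Set.mem_singleton_iff]
      constructor
      · rintro (⟨ha', hb', h⟩ | ⟨-, h⟩ | ⟨hb', h⟩)
        · exact absurd ha ((hAmem a).1 ha').2
        · exact h.symm
        · exfalso
          have := (hf1 b hb').2
          rw [h] at this
          exact hIS₀ a ha this
      · rintro rfl
        exact Or.inr (Or.inl ⟨ha, rfl⟩)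
    have hNS : ∀ s, s ∈ S₀ → F.neighborSet s = ↑(Ifin.filter (fun i => f i = s)) := by
      intro s hs
      ext b
      simp only [SimpleGraph.mem_neighborSet, Finset.coe_filter, Set.mem_setOf_eq]
      constructor
      · rintro (⟨hs', hb', h⟩ | ⟨hsI, h⟩ | ⟨hbI, h⟩)
        · exact absurd hs ((hAmem s).1 hs').1
        · exact absurd hs (hIS₀ s hsI)
        · exact ⟨hbI, h⟩
      · rintro ⟨hbI, hfb⟩
        exact Or.inr (Or.inr ⟨hbI, hfb⟩)
    have hNA : ∀ a (ha : a ∈ Aset),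
        F.neighborSet a = Subtype.val '' (F'.neighborSet ⟨a, ha⟩) := by
      intro a ha
      ext b
      simp only [SimpleGraph.mem_neighborSet]
      constructor
      · rintro (⟨ha', hb', h⟩ | ⟨haI, h⟩ | ⟨hbI, h⟩)
        · have heq : (⟨a, ha'⟩ : ↥Aset) = ⟨a, ha⟩ := Subtype.ext rfl
          rw [heq] at h
          exact ⟨⟨b, hb'⟩, h, rfl⟩
        · exact absurd haI ((hAmem a).1 ha).2
        · exfalso
          have := (hf1 b hbI).2
          rw [h] at this
          exact ((hAmem a).1 ha).1 this
      · rintro ⟨b', hb', rfl⟩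
        exact Or.inl ⟨ha, b'.2, hb'⟩
    have hdegI : ∀ a ∈ Ifin, (F.neighborSet a).ncard = 1 := by
      intro a ha
      rw [hNI a ha]
      exact Set.ncard_singleton _
    have hdegS : ∀ s ∈ S₀, 1 ≤ (F.neighborSet s).ncard ∧ (F.neighborSet s).ncard ≤ k := by
      intro s hs
      rw [hNS s hs, Set.ncard_coe_finset]
      constructor
      · obtain ⟨i, hi, hfi⟩ := hfib s hs
        exact Finset.card_pos.mpr ⟨i, Finset.mem_filter.mpr ⟨hi, hfi⟩⟩
      · exact hf2 s
    have hdegA : ∀ a (ha : a ∈ Aset),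
        (F.neighborSet a).ncard = (F'.neighborSet ⟨a, ha⟩).ncard := by
      intro a ha
      rw [hNA a ha, Set.ncard_image_of_injective _ Subtype.val_injective]
    refine ⟨F, hFle, ?_, ?_⟩
    · intro v
      by_cases h1 : v ∈ S₀
      · exact hdegS v h1
      by_cases h2 : v ∈ Ifin
      · rw [hdegI v h2]; omega
      have hva : v ∈ Aset := (hAmem v).2 ⟨h1, h2⟩
      rw [hdegA v hva]
      exact hF'good.1 _
    · intro x y hxy
      rcases hxy with ⟨hx, hy, h⟩ | ⟨hxI, -⟩ | ⟨hyI, -⟩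
      · rcases hF'good.2 _ _ h with h1 | h1
        · left; rw [hdegA x hx]; exact h1
        · right; rw [hdegA y hy]; exact h1
      · left; exact hdegI x hxI
      · right; exact hdegI y hyI
  -- ==================== CASE B ====================
  · push_neg at hA
    have hB : ∀ S : Finset V, S.Nonempty → isoNum G ↑S + k ≤ k * S.card := by
      intro S hS
      have := hA S hS
      omega
    have htwo : ∀ v : V, ∃ w u : V, G.Adj v w ∧ G.Adj v u ∧ w ≠ u := by
      intro v
      have h0 : ∃ w, G.Adj v w := by
        by_contra h
        push_neg at h
        have hmem : v ∈ {x : V | x ∉ (∅ : Set V) ∧ ∀ w, G.Adj x w → w ∈ (∅ : Set V)} :=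
          ⟨Set.notMem_empty v, fun w hw => absurd hw (h w)⟩
        have h1 : 0 < isoNum G ∅ := by
          unfold isoNum
          exact (Set.ncard_pos (Set.toFinite _)).mpr ⟨v, hmem⟩
        have h2 := hcond ∅
        rw [Set.ncard_empty] at h2
        omega
      obtain ⟨w, hw⟩ := h0
      by_contra hcon
      push_neg at hcon
      have huniq : ∀ u, G.Adj v u → u = w := by
        intro u hu
        by_contra hne
        exact hne (hcon w u hw hu).symm
      have hmem : v ∈ {x : V | x ∉ (↑({w} : Finset V) : Set V) ∧
          ∀ z, G.Adj x z → z ∈ (↑({w} : Finset V) : Set V)} := by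
        constructor
        · simp only [Finset.coe_singleton, Set.mem_singleton_iff]
          rintro rfl
          exact G.irrefl hw
        · intro z hz
          simp only [Finset.coe_singleton, Set.mem_singleton_iff]
          exact huniq z hz
      have h1 : 0 < isoNum G ↑({w} : Finset V) := by
        unfold isoNum
        exact (Set.ncard_pos (Set.toFinite _)).mpr ⟨v, hmem⟩
      have h2 := hB {w} ⟨w, Finset.mem_singleton_self w⟩
      rw [Finset.card_singleton] at h2
      omega
    obtain ⟨v⟩ := hV
    obtain ⟨w, -, hw, -, -⟩ := htwo v
    set G2 : SimpleGraph V := G.deleteEdges {s(v, w)} with hG2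
    have hG2adj : ∀ a b, G2.Adj a b ↔ G.Adj a b ∧ s(a, b) ≠ s(v, w) := by
      intro a b
      rw [hG2, SimpleGraph.deleteEdges_adj]
      simp
    have hcond2 : ∀ S : Set V, isoNum G2 S ≤ k * S.ncard := by
      intro S
      set J : Set V := {x : V | x ∉ S ∧ ∀ z, G.Adj x z → z ∈ S} with hJ
      set J2 : Set V := {x : V | x ∉ S ∧ ∀ z, G2.Adj x z → z ∈ S} with hJ2
      have hsub : J2 ⊆ J ∪ {v, w} := by
        intro a ha
        by_cases hvw : a = v ∨ a = w
        · right
          simpa using hvw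
        · left
          push_neg at hvw
          refine ⟨ha.1, fun z hz => ha.2 z ?_⟩
          rw [hG2adj]
          refine ⟨hz, fun heq => ?_⟩
          have hina : a ∈ s(v, w) := by
            rw [← heq]
            exact Sym2.mem_mk_left a z
          rw [Sym2.mem_iff] at hina
          tauto
      by_cases hcase : J2 ⊆ J
      · calc isoNum G2 S = J2.ncard := rfl
          _ ≤ J.ncard := Set.ncard_le_ncard hcase (Set.toFinite _)
          _ = isoNum G S := rfl
          _ ≤ k * S.ncard := hcond S
      · rw [Set.not_subset] at hcase
        obtain ⟨a, haJ2, haJ⟩ := hcase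
        have hSne : S.Nonempty := by
          obtain ⟨w1, u1, h1, h2, h3⟩ := htwo a
          have hkey : ∀ z, G.Adj a z → s(a, z) ≠ s(v, w) → z ∈ S := by
            intro z hz hne
            exact haJ2.2 z ((hG2adj a z).mpr ⟨hz, hne⟩)
          by_cases hc1 : s(a, w1) = s(v, w)
          · have hc2 : s(a, u1) ≠ s(v, w) := by
              rw [← hc1]
              intro hh
              exact h3 (Sym2.congr_right.mp hh).symm
            exact ⟨u1, hkey u1 h2 hc2⟩
          · exact ⟨w1, hkey w1 h1 hc1⟩
        obtain ⟨s₀, hs₀⟩ := hSne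
        have hfinS : S.Finite := Set.toFinite _
        have hfin := hB hfinS.toFinset ⟨s₀, hfinS.mem_toFinset.mpr hs₀⟩
        rw [Set.Finite.coe_toFinset] at hfin
        have hcardeq : hfinS.toFinset.card = S.ncard := (Set.ncard_eq_toFinset_card _ _).symm
        rw [hcardeq] at hfin
        have hstep : isoNum G2 S ≤ isoNum G S + 2 := by
          calc isoNum G2 S = J2.ncard := rfl
            _ ≤ (J ∪ {v, w}).ncard := Set.ncard_le_ncard hsub (Set.toFinite _)
            _ ≤ J.ncard + ({v, w} : Set V).ncard := Set.ncard_union_le _ _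
            _ ≤ isoNum G S + 2 := by
                have h5 : ({v, w} : Set V).ncard ≤ 2 := by
                  have := Set.ncard_insert_le v ({w} : Set V)
                  rw [Set.ncard_singleton] at this
                  omega
                have : J.ncard = isoNum G S := rfl
                omega
        omega
    have hedge : G2.edgeSet.ncard < G.edgeSet.ncard := by
      have hmemE : s(v, w) ∈ G.edgeSet := hw
      have : G2.edgeSet = G.edgeSet \ {s(v, w)} := by
        rw [hG2, SimpleGraph.edgeSet_deleteEdges]
      rw [this, Set.ncard_diff_singleton_of_mem hmemE]
      have hpos : 0 < G.edgeSet.ncard :=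
        Set.ncard_pos (Set.toFinite _) |>.mpr ⟨_, hmemE⟩
      omega
    have hmeas : Fintype.card V + G2.edgeSet.ncard < n := by omega
    obtain ⟨F, hFle, hFgood⟩ := ih _ hmeas V G2 rfl hcond2
    exact ⟨F, hFle.trans (SimpleGraph.deleteEdges_le _), hFgood⟩

end Aux2

/-- Amahashi–Kano: for `k ≥ 2`, `G` has a `{K_{1,1}, …, K_{1,k}}`-factor iff
`iso(G-S) ≤ k|S|` for all `S ⊆ V(G)`. -/
theorem stmt4 {V : Type*} [Fintype V] (G : SimpleGraph V) (k : ℕ) (hk : 2 ≤ k) :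
    (∃ F : SimpleGraph V, F ≤ G ∧ ∀ v : V, ∃ j : ℕ, 1 ≤ j ∧ j ≤ k ∧
        Nonempty (compAt F v ≃g completeBipartiteGraph (Fin 1) (Fin j))) ↔
      ∀ S : Set V, isoNum G S ≤ k * S.ncard := by
  constructor
  · rintro ⟨F, hFG, hstar⟩ S
    have hdeg : ∀ v, 1 ≤ (F.neighborSet v).ncard ∧ (F.neighborSet v).ncard ≤ k := by
      intro v
      obtain ⟨j, hj1, hjk, ⟨φ⟩⟩ := hstar v
      exact ak_deg_of_iso hj1 hjk φ
    exact ak_forward hFG hdeg S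
  · intro hcond
    obtain ⟨F, hFG, hgood⟩ := ak_core k hk _ V G rfl hcond
    exact ⟨F, hFG, fun v => ak_star_iso hgood v⟩
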